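/- Let n_x, n_y be coprime positive integers and φ_x, φ_y real numbers such that n_y·φ_x − n_x·φ_y is not an integer multiple of π. Among the pairs (t₁, t₂) with 0 ≤ t₁ < t₂ < 2π, cos(n_x t₁ + φ_x) = cos(n_x t₂ + φ_x), and cos(n_y t₁ + φ_y) = cos(n_y t₂ + φ_y): exactly n_x·n_y − n_y of them satisfy n_x(t₂ − t₁) ∈ 2πℤ (the Type I double points), exactly n_x·n_y − n_x of them satisfy n_y(t₂ − t₁) ∈ 2πℤ (the Type II double points), and every such pair is of exactly one of these two kinds. -/

import Mathlib

open Real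

namespace LissajousAux

/-- grid function: lower bound for `m` given `a`. -/
noncomputable def L (nx ny : ℕ) (φy : ℝ) (a : ℤ) : ℝ := ny * a / nx + φy / π

/-- parameter map from integer data to the double point. -/
noncomputable def f (nx ny : ℕ) (φy : ℝ) (q : ℤ × ℤ) : ℝ × ℝ :=
  (π * q.2 / ny - φy / ny - π * q.1 / nx, π * q.2 / ny - φy / ny + π * q.1 / nx)

/-- the finite index set. -/
noncomputable def F (nx ny : ℕ) (φy : ℝ) : Finset (ℤ × ℤ) :=
  (Finset.Ico (1:ℤ) (nx:ℤ)).biUnion fun a =>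
    (Finset.Ico ⌈L nx ny φy a⌉ ((ny:ℤ) + ⌈L nx ny φy ((nx:ℤ) - a)⌉)).image fun m => (a, m)

lemma mem_F {nx ny : ℕ} {φy : ℝ} {q : ℤ × ℤ} :
    q ∈ F nx ny φy ↔ 1 ≤ q.1 ∧ q.1 < (nx:ℤ) ∧ L nx ny φy q.1 ≤ (q.2:ℝ) ∧
      (q.2 : ℝ) < (ny:ℝ) + L nx ny φy ((nx:ℤ) - q.1) := by
  obtain ⟨a, m⟩ := q
  simp only [F, Finset.mem_biUnion, Finset.mem_image, Finset.mem_Ico, Prod.mk.injEq]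
  constructor
  · rintro ⟨a', ⟨ha1, ha2⟩, m', ⟨hm1, hm2⟩, rfl, rfl⟩
    refine ⟨ha1, ha2, Int.ceil_le.mp hm1, ?_⟩
    have : m' < ⌈(L nx ny φy ((nx:ℤ) - a')) + (ny:ℤ)⌉ := by
      rw [Int.ceil_add_intCast]; omega
    have := Int.lt_ceil.mp this
    push_cast at this ⊢
    linarith
  · rintro ⟨h1, h2, h3, h4⟩
    refine ⟨a, ⟨h1, h2⟩, m, ⟨Int.ceil_le.mpr h3, ?_⟩, rfl, rfl⟩
    have : m < ⌈(L nx ny φy ((nx:ℤ) - a)) + (ny:ℤ)⌉ := by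
      rw [Int.lt_ceil]; push_cast; linarith
    rw [Int.ceil_add_intCast] at this; omega

lemma f_inj {nx ny : ℕ} (hnx : 0 < nx) (hny : 0 < ny) (φy : ℝ) :
    Function.Injective (f nx ny φy) := by
  have hπ : (0:ℝ) < π := Real.pi_pos
  have hnx' : (0:ℝ) < (nx:ℝ) := by exact_mod_cast hnx
  have hny' : (0:ℝ) < (ny:ℝ) := by exact_mod_cast hny
  rintro ⟨a, m⟩ ⟨a', m'⟩ h
  simp only [f, Prod.mk.injEq] at h
  obtain ⟨h1, h2⟩ := h
  have ha : a = a' := by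
    have h3 : π * (a:ℝ) / nx = π * (a':ℝ) / nx := by linarith
    field_simp at h3
    exact_mod_cast h3
  have hm : m = m' := by
    have h3 : π * (m:ℝ) / ny = π * (m':ℝ) / ny := by linarith
    field_simp at h3
    exact_mod_cast h3
  simp [Prod.ext_iff, ha, hm]

/-- both-difference-type is impossible. -/
lemma not_both_diff {nx ny : ℕ} (hnx : 0 < nx) (hny : 0 < ny) (hcop : Nat.Coprime nx ny)
    {x y : ℝ} (hxy : x < y) (hd : y - x < 2 * π)
    {a b : ℤ} (ha : (nx:ℝ) * (y - x) = a * (2 * π)) (hb : (ny:ℝ) * (y - x) = b * (2 * π)) :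
    False := by
  have hπ : (0:ℝ) < π := Real.pi_pos
  have hnx' : (0:ℝ) < (nx:ℝ) := by exact_mod_cast hnx
  have hny' : (0:ℝ) < (ny:ℝ) := by exact_mod_cast hny
  have hapos : 0 < a := by
    have : (0:ℝ) < (a:ℝ) * (2 * π) := by nlinarith
    have : (0:ℝ) < (a:ℝ) := by nlinarith
    exact_mod_cast this
  have halt : a < nx := by
    have : (a:ℝ) * (2 * π) < (nx:ℝ) * (2 * π) := by nlinarith
    have : (a:ℝ) < (nx:ℝ) := by nlinarith
    exact_mod_cast this
  have key : (ny:ℝ) * a = (nx:ℝ) * b := by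
    have h1 : (ny:ℝ) * ((nx:ℝ) * (y - x)) = (ny:ℝ) * ((a:ℝ) * (2 * π)) := by rw [ha]
    have h2 : (nx:ℝ) * ((ny:ℝ) * (y - x)) = (nx:ℝ) * ((b:ℝ) * (2 * π)) := by rw [hb]
    have h3 : ((ny:ℝ) * a - (nx:ℝ) * b) * (2 * π) = 0 := by linarith
    rcases mul_eq_zero.mp h3 with h | h
    · linarith
    · exfalso; nlinarith
  have keyZ : (ny:ℤ) * a = (nx:ℤ) * b := by exact_mod_cast key
  have hcopZ : IsCoprime (nx:ℤ) (ny:ℤ) := Nat.isCoprime_iff_coprime.mpr hcop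
  have hdvd : (nx:ℤ) ∣ a := hcopZ.dvd_of_dvd_mul_left ⟨b, keyZ⟩
  have := Int.le_of_dvd hapos hdvd
  omega

/-- The Type-I double point set equals the image of the finite index set. -/
lemma set_eq (nx ny : ℕ) (hnx : 0 < nx) (hny : 0 < ny) (hcop : Nat.Coprime nx ny)
    (φx φy : ℝ) :
    {p : ℝ × ℝ | (0 ≤ p.1 ∧ p.1 < p.2 ∧ p.2 < 2 * π ∧
      Real.cos (nx * p.1 + φx) = Real.cos (nx * p.2 + φx) ∧
      Real.cos (ny * p.1 + φy) = Real.cos (ny * p.2 + φy)) ∧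
      ∃ l : ℤ, (nx : ℝ) * (p.2 - p.1) = l * (2 * π)}
      = f nx ny φy '' ↑(F nx ny φy) := by
  have hπ : (0:ℝ) < π := Real.pi_pos
  have hnx' : (0:ℝ) < (nx:ℝ) := by exact_mod_cast hnx
  have hny' : (0:ℝ) < (ny:ℝ) := by exact_mod_cast hny
  have hnx0 : (nx:ℝ) ≠ 0 := ne_of_gt hnx'
  have hny0 : (ny:ℝ) ≠ 0 := ne_of_gt hny'
  have hπ0 : π ≠ 0 := ne_of_gt hπ
  ext p
  simp only [Set.mem_setOf_eq, Set.mem_image, Finset.mem_coe]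
  constructor
  · rintro ⟨⟨h0, hxy, h2, hcx, hcy⟩, l, hl⟩
    obtain ⟨x, y⟩ := p
    simp only at h0 hxy h2 hcx hcy hl ⊢
    have hlpos : 0 < l := by
      have h5 : (0:ℝ) < (l:ℝ) * (2 * π) := by rw [← hl]; nlinarith
      have : (0:ℝ) < (l:ℝ) := by nlinarith
      exact_mod_cast this
    have hllt : l < (nx:ℤ) := by
      have h5 : (l:ℝ) * (2 * π) < (nx:ℝ) * (2 * π) := by rw [← hl]; nlinarith
      have : (l:ℝ) < (nx:ℝ) := by nlinarith
      exact_mod_cast this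
    rw [Real.cos_eq_cos_iff] at hcy
    obtain ⟨k, hk | hk⟩ := hcy
    · exact absurd (not_both_diff hnx hny hcop hxy (by linarith) (a := l) (b := k) hl
        (by push_cast; linarith)) (fun h => h)
    · -- sum case: ny*(x+y) + 2φy = 2kπ
      have hk' : (ny:ℝ) * (x + y) + 2 * φy = 2 * (k:ℝ) * π := by push_cast at hk ⊢; linarith
      have hx2 : x * ((nx:ℝ) * ny) = k * π * nx - φy * nx - l * π * ny := by
        linear_combination ((nx:ℝ)/2) * hk' - ((ny:ℝ)/2) * hl
      have hy2 : y * ((nx:ℝ) * ny) = k * π * nx - φy * nx + l * π * ny := by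
        linear_combination ((nx:ℝ)/2) * hk' + ((ny:ℝ)/2) * hl
      refine ⟨(l, k), mem_F.mpr ⟨hlpos, hllt, ?_, ?_⟩, ?_⟩
      · -- L l ≤ k, from 0 ≤ x
        show (ny:ℝ) * l / nx + φy / π ≤ (k:ℝ)
        rw [div_add_div _ _ hnx0 hπ0, div_le_iff₀ (by positivity)]
        have := mul_nonneg h0 (le_of_lt (mul_pos hnx' hny'))
        linarith [hx2]
      · -- k < ny + L (nx - l), from y < 2π
        show (k:ℝ) < (ny:ℝ) + ((ny:ℝ) * ((nx:ℤ) - l : ℤ) / nx + φy / π)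
        push_cast
        rw [← sub_pos]
        have expand : (ny:ℝ) + ((ny:ℝ) * ((nx:ℝ) - (l:ℝ)) / nx + φy / π) - k
            = ((2 * π * ny * nx - (ny * l * π + (k * π - φy) * nx))) / (nx * π) := by
          field_simp; ring
        rw [expand]
        apply div_pos _ (by positivity)
        have := mul_lt_mul_of_pos_right h2 (mul_pos hnx' hny')
        linarith [hy2]
      · -- p = f (l, k)
        simp only [f, Prod.mk.injEq]
        constructor
        · have hrw : π * (k:ℝ) / ny - φy / ny - π * (l:ℝ) / nx
              = ((k:ℝ) * π * nx - φy * nx - (l:ℝ) * π * ny) / (nx * ny) := by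
            field_simp
          rw [hrw, div_eq_iff (by positivity)]
          linarith [hx2]
        · have hrw : π * (k:ℝ) / ny - φy / ny + π * (l:ℝ) / nx
              = ((k:ℝ) * π * nx - φy * nx + (l:ℝ) * π * ny) / (nx * ny) := by
            field_simp
          rw [hrw, div_eq_iff (by positivity)]
          linarith [hy2]
  · rintro ⟨⟨a, m⟩, hq, rfl⟩
    obtain ⟨h1, h2, h3, h4⟩ := mem_F.mp hq
    simp only [f]
    have ha1 : (1:ℝ) ≤ (a:ℝ) := by exact_mod_cast h1
    have ha2 : (a:ℝ) ≤ (nx:ℝ) := by exact_mod_cast h2.le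
    have h3' : (ny:ℝ) * a / nx + φy / π ≤ (m:ℝ) := h3
    have h4' : (m:ℝ) < (ny:ℝ) + ((ny:ℝ) * ((nx:ℝ) - (a:ℝ)) / nx + φy / π) := by
      have h5 := h4; unfold L at h5; push_cast at h5; exact h5
    rw [div_add_div _ _ hnx0 hπ0, div_le_iff₀ (by positivity)] at h3'
    have h4'' : (m:ℝ) * (nx * π) < 2 * π * ny * nx - (ny * a * π - φy * nx) := by
      have hrw : (ny:ℝ) + ((ny:ℝ) * ((nx:ℝ) - (a:ℝ)) / nx + φy / π)
          = (2 * π * ny * nx - (ny * a * π - φy * nx)) / (nx * π) := by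
        field_simp; ring
      rw [hrw, lt_div_iff₀ (by positivity)] at h4'
      linarith
    refine ⟨⟨?_, ?_, ?_, ?_, ?_⟩, ⟨a, ?_⟩⟩
    · -- 0 ≤ t1
      have h5 : 0 ≤ ((m:ℝ) * (nx * π) - (ny * a * π + nx * φy)) / (nx * ny) := by
        apply div_nonneg _ (by positivity); linarith
      calc (0:ℝ) ≤ _ := h5
        _ = π * m / ny - φy / ny - π * a / nx := by field_simp; ring
    · -- t1 < t2
      have h5 : (0:ℝ) < π * a / nx := by positivity
      linarith
    · -- t2 < 2π
      have h5 : ((m:ℝ) * (nx * π) - (2 * π * ny * nx - (ny * a * π - φy * nx))) / (nx * ny) < 0 := by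
        apply div_neg_of_neg_of_pos _ (by positivity); linarith
      have heq : ((m:ℝ) * (nx * π) - (2 * π * ny * nx - (ny * a * π - φy * nx))) / (nx * ny)
          = (π * m / ny - φy / ny + π * a / nx) - 2 * π := by field_simp; ring
      rw [heq] at h5
      linarith
    · -- cos x equality
      rw [Real.cos_eq_cos_iff]
      exact ⟨a, Or.inl (by field_simp; ring)⟩
    · -- cos y equality
      rw [Real.cos_eq_cos_iff]
      exact ⟨m, Or.inr (by field_simp; ring)⟩
    · -- Type I witness
      field_simp; ring

lemma card_F (nx ny : ℕ) (hnx : 0 < nx) (hny : 0 < ny) (φy : ℝ) :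
    (F nx ny φy).card = nx * ny - ny := by
  have hπ : (0:ℝ) < π := Real.pi_pos
  have hnx' : (0:ℝ) < (nx:ℝ) := by exact_mod_cast hnx
  have hny' : (0:ℝ) < (ny:ℝ) := by exact_mod_cast hny
  have hdisj : ∀ a ∈ Finset.Ico (1:ℤ) (nx:ℤ), ∀ b ∈ Finset.Ico (1:ℤ) (nx:ℤ), a ≠ b →
      Disjoint ((Finset.Ico ⌈L nx ny φy a⌉ ((ny:ℤ) + ⌈L nx ny φy ((nx:ℤ) - a)⌉)).image
        (fun m => (a, m)))
        ((Finset.Ico ⌈L nx ny φy b⌉ ((ny:ℤ) + ⌈L nx ny φy ((nx:ℤ) - b)⌉)).image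
        (fun m => (b, m))) := by
    intro a _ b _ hab
    simp only [Finset.disjoint_left, Finset.mem_image]
    rintro ⟨c, d⟩ ⟨m, _, hm⟩ ⟨m', _, hm'⟩
    cases hm; cases hm'; exact hab rfl
  rw [F, Finset.card_biUnion hdisj]
  have hstep : ∀ a ∈ Finset.Ico (1:ℤ) (nx:ℤ),
      ((Finset.Ico ⌈L nx ny φy a⌉ ((ny:ℤ) + ⌈L nx ny φy ((nx:ℤ) - a)⌉)).image
        (fun m => (a, m))).card
      = ((ny:ℤ) + ⌈L nx ny φy ((nx:ℤ) - a)⌉ - ⌈L nx ny φy a⌉).toNat := by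
    intro a _
    rw [Finset.card_image_of_injective _ (fun m m' h => by simpa using h), Int.card_Ico]
  rw [Finset.sum_congr rfl hstep]
  -- nonnegativity of each term
  have hnonneg : ∀ a ∈ Finset.Ico (1:ℤ) (nx:ℤ),
      0 ≤ (ny:ℤ) + ⌈L nx ny φy ((nx:ℤ) - a)⌉ - ⌈L nx ny φy a⌉ := by
    intro a ha
    simp only [Finset.mem_Ico] at ha
    have hle : L nx ny φy a ≤ L nx ny φy ((nx:ℤ) - a) + (ny:ℤ) := by
      unfold L
      push_cast
      have h1 : (a:ℝ) ≤ (nx:ℝ) := by exact_mod_cast ha.2.le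
      rw [← sub_nonneg]
      have heq : (ny:ℝ) * ((nx:ℝ) - a) / nx + φy / π + ny - ((ny:ℝ) * a / nx + φy / π)
          = 2 * ny * ((nx:ℝ) - a) / nx := by field_simp; ring
      rw [heq]
      apply div_nonneg _ (le_of_lt hnx')
      nlinarith
    have := Int.ceil_le_ceil hle
    rw [Int.ceil_add_intCast] at this
    omega
  -- cast the sum to ℤ
  have hcast : ((∑ a ∈ Finset.Ico (1:ℤ) (nx:ℤ),
      ((ny:ℤ) + ⌈L nx ny φy ((nx:ℤ) - a)⌉ - ⌈L nx ny φy a⌉).toNat : ℕ) : ℤ)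
      = ∑ a ∈ Finset.Ico (1:ℤ) (nx:ℤ),
        ((ny:ℤ) + ⌈L nx ny φy ((nx:ℤ) - a)⌉ - ⌈L nx ny φy a⌉) := by
    push_cast
    exact Finset.sum_congr rfl fun a ha => Int.toNat_of_nonneg (hnonneg a ha)
  have hre : ∑ a ∈ Finset.Ico (1:ℤ) (nx:ℤ), ⌈L nx ny φy ((nx:ℤ) - a)⌉
      = ∑ a ∈ Finset.Ico (1:ℤ) (nx:ℤ), ⌈L nx ny φy a⌉ := by
    refine Finset.sum_nbij' (fun a => (nx:ℤ) - a) (fun a => (nx:ℤ) - a) ?_ ?_ ?_ ?_ ?_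
    · intro a ha; simp only [Finset.mem_Ico] at ha ⊢; omega
    · intro a ha; simp only [Finset.mem_Ico] at ha ⊢; omega
    · intro a _; show (nx:ℤ) - ((nx:ℤ) - a) = a; omega
    · intro a _; show (nx:ℤ) - ((nx:ℤ) - a) = a; omega
    · intro a _; rfl
  have hsum : ∑ a ∈ Finset.Ico (1:ℤ) (nx:ℤ),
      ((ny:ℤ) + ⌈L nx ny φy ((nx:ℤ) - a)⌉ - ⌈L nx ny φy a⌉)
      = (ny:ℤ) * ((nx:ℤ) - 1) := by
    rw [Finset.sum_sub_distrib, Finset.sum_add_distrib, hre]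
    simp only [Finset.sum_const, Int.card_Ico, nsmul_eq_mul]
    have h9 : ((((nx:ℤ) - 1).toNat : ℕ) : ℤ) = (nx:ℤ) - 1 := by omega
    rw [h9]
    ring
  have : ((∑ a ∈ Finset.Ico (1:ℤ) (nx:ℤ),
      ((ny:ℤ) + ⌈L nx ny φy ((nx:ℤ) - a)⌉ - ⌈L nx ny φy a⌉).toNat : ℕ) : ℤ)
      = ((nx * ny - ny : ℕ) : ℤ) := by
    rw [hcast, hsum]
    have hle : ny ≤ nx * ny := Nat.le_mul_of_pos_left ny hnx
    push_cast [Nat.cast_sub hle]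
    ring
  exact_mod_cast this

/-- Count of Type-I double points. -/
lemma count_typeI (nx ny : ℕ) (hnx : 0 < nx) (hny : 0 < ny) (hcop : Nat.Coprime nx ny)
    (φx φy : ℝ) :
    {p : ℝ × ℝ | (0 ≤ p.1 ∧ p.1 < p.2 ∧ p.2 < 2 * π ∧
      Real.cos (nx * p.1 + φx) = Real.cos (nx * p.2 + φx) ∧
      Real.cos (ny * p.1 + φy) = Real.cos (ny * p.2 + φy)) ∧
      ∃ l : ℤ, (nx : ℝ) * (p.2 - p.1) = l * (2 * π)}.Finite ∧
    {p : ℝ × ℝ | (0 ≤ p.1 ∧ p.1 < p.2 ∧ p.2 < 2 * π ∧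
      Real.cos (nx * p.1 + φx) = Real.cos (nx * p.2 + φx) ∧
      Real.cos (ny * p.1 + φy) = Real.cos (ny * p.2 + φy)) ∧
      ∃ l : ℤ, (nx : ℝ) * (p.2 - p.1) = l * (2 * π)}.ncard = nx * ny - ny := by
  rw [set_eq nx ny hnx hny hcop φx φy]
  refine ⟨((F nx ny φy).finite_toSet).image _, ?_⟩
  rw [Set.ncard_image_of_injective _ (f_inj hnx hny φy), Set.ncard_coe_finset,
    card_F nx ny hnx hny φy]

end LissajousAux

open LissajousAux in
/-- Among the double points of the `xy`-projection of a nondegenerate Lissajous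
curve, exactly `nx·ny − ny` are of Type I (`nx(t₂ − t₁) ∈ 2πℤ`), exactly
`nx·ny − nx` are of Type II (`ny(t₂ − t₁) ∈ 2πℤ`), and every double point is of
exactly one of the two types. -/
theorem lissajous_double_points_type_counts
    (nx ny : ℕ) (hnx : 0 < nx) (hny : 0 < ny) (hcop : Nat.Coprime nx ny)
    (φx φy : ℝ) (hphase : ¬ ∃ l : ℤ, (ny : ℝ) * φx - (nx : ℝ) * φy = l * π)
    (S : Set (ℝ × ℝ))
    (hS : S = {p : ℝ × ℝ | 0 ≤ p.1 ∧ p.1 < p.2 ∧ p.2 < 2 * π ∧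
      Real.cos (nx * p.1 + φx) = Real.cos (nx * p.2 + φx) ∧
      Real.cos (ny * p.1 + φy) = Real.cos (ny * p.2 + φy)})
    (TypeI TypeII : ℝ × ℝ → Prop)
    (hTI : ∀ p, TypeI p ↔ ∃ l : ℤ, (nx : ℝ) * (p.2 - p.1) = l * (2 * π))
    (hTII : ∀ p, TypeII p ↔ ∃ l : ℤ, (ny : ℝ) * (p.2 - p.1) = l * (2 * π)) :
    {p ∈ S | TypeI p}.Finite ∧ {p ∈ S | TypeI p}.ncard = nx * ny - ny ∧
    {p ∈ S | TypeII p}.Finite ∧ {p ∈ S | TypeII p}.ncard = nx * ny - nx ∧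
    ∀ p ∈ S, (TypeI p ∧ ¬ TypeII p) ∨ (TypeII p ∧ ¬ TypeI p) := by
  have hsetI : {p ∈ S | TypeI p}
      = {p : ℝ × ℝ | (0 ≤ p.1 ∧ p.1 < p.2 ∧ p.2 < 2 * π ∧
        Real.cos (nx * p.1 + φx) = Real.cos (nx * p.2 + φx) ∧
        Real.cos (ny * p.1 + φy) = Real.cos (ny * p.2 + φy)) ∧
        ∃ l : ℤ, (nx : ℝ) * (p.2 - p.1) = l * (2 * π)} := by
    ext p
    simp only [Set.mem_setOf_eq, Set.mem_sep_iff, hS, hTI]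
  have hsetII : {p ∈ S | TypeII p}
      = {p : ℝ × ℝ | (0 ≤ p.1 ∧ p.1 < p.2 ∧ p.2 < 2 * π ∧
        Real.cos (ny * p.1 + φy) = Real.cos (ny * p.2 + φy) ∧
        Real.cos (nx * p.1 + φx) = Real.cos (nx * p.2 + φx)) ∧
        ∃ l : ℤ, (ny : ℝ) * (p.2 - p.1) = l * (2 * π)} := by
    ext p
    simp only [Set.mem_setOf_eq, Set.mem_sep_iff, hS, hTII]
    tauto
  obtain ⟨hfinI, hcardI⟩ := count_typeI nx ny hnx hny hcop φx φy
  obtain ⟨hfinII, hcardII⟩ := count_typeI ny nx hny hnx hcop.symm φy φx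
  refine ⟨hsetI ▸ hfinI, hsetI ▸ hcardI, hsetII ▸ hfinII, ?_, ?_⟩
  · rw [hsetII, hcardII, Nat.mul_comm]
  · -- exclusivity
    intro p hp
    rw [hS] at hp
    obtain ⟨x, y⟩ := p
    obtain ⟨h0, hxy, h2, hcx, hcy⟩ := hp
    have hd : y - x < 2 * π := by linarith
    rw [Real.cos_eq_cos_iff] at hcx hcy
    obtain ⟨k, hk | hk⟩ := hcx <;> obtain ⟨k', hk' | hk'⟩ := hcy
    · exact (not_both_diff hnx hny hcop hxy hd
        (a := k) (b := k') (by push_cast; linarith) (by push_cast; linarith)).elim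
    · left
      refine ⟨(hTI _).mpr ⟨k, by push_cast; linarith⟩, fun hII => ?_⟩
      obtain ⟨b, hb⟩ := (hTII _).mp hII
      exact not_both_diff hnx hny hcop hxy hd
        (a := k) (b := b) (by push_cast; linarith) hb
    · right
      refine ⟨(hTII _).mpr ⟨k', by push_cast; linarith⟩, fun hI => ?_⟩
      obtain ⟨a, ha⟩ := (hTI _).mp hI
      exact not_both_diff hnx hny hcop hxy hd
        (a := a) (b := k') ha (by push_cast; linarith)
    · exfalso
      apply hphase
      refine ⟨k * ny - k' * nx, ?_⟩
      -- hk : nx*y + φx = 2kπ - (nx*x + φx), hk' : ny*y + φy = 2k'π - (ny*x + φy)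
      have e1 : (nx:ℝ) * (x + y) + 2 * φx = 2 * k * π := by push_cast at hk ⊢; linarith
      have e2 : (ny:ℝ) * (x + y) + 2 * φy = 2 * k' * π := by push_cast at hk' ⊢; linarith
      push_cast
      nlinarith [e1, e2]
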